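/- (Rudakov/King: φ-semistable modules of a fixed slope form an abelian category) Let M and N be φ-semistable A-modules with slope_φ(M) = slope_φ(N), and let f : M → N be an A-module homomorphism. If ker f ≠ 0, then ker f is φ-semistable and slope_φ(ker f) = slope_φ(M); and if f is not surjective, then the cokernel N/f(M) is φ-semistable and slope_φ(N/f(M)) = slope_φ(N). -/

import Mathlib

/-- A left module over a ℂ-algebra `A` which is finite dimensional over ℂ. -/
structure FdMod (A : Type) [Ring A] [Algebra ℂ A] : Type 1 where
  carrier : Type
  [addCommGroup : AddCommGroup carrier]
  [moduleC : Module ℂ carrier]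
  [moduleA : Module A carrier]
  [tower : IsScalarTower ℂ A carrier]
  [fd : FiniteDimensional ℂ carrier]

attribute [instance] FdMod.addCommGroup FdMod.moduleC FdMod.moduleA FdMod.tower FdMod.fd

variable {A : Type} [Ring A] [Algebra ℂ A]

/-- An `A`-submodule, viewed as a finite-dimensional module over the ℂ-algebra `A`. -/
noncomputable def FdMod.sub (M : FdMod A) (N : Submodule A M.carrier) : FdMod A where
  carrier := ↥N
  fd := FiniteDimensional.of_injective (N.subtype.restrictScalars ℂ) Subtype.val_injective

/-- The quotient by an `A`-submodule, viewed as a finite-dimensional module over the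
ℂ-algebra `A`. -/
noncomputable def FdMod.quot (M : FdMod A) (N : Submodule A M.carrier) : FdMod A where
  carrier := M.carrier ⧸ N
  fd := Module.Finite.of_surjective (N.mkQ.restrictScalars ℂ) (Submodule.mkQ_surjective N)

/-- The fdSlope of a module with respect to the additive function `φ`. -/
noncomputable def fdSlope (φ : FdMod A → ℝ) (M : FdMod A) : ℝ :=
  φ M / (Module.finrank ℂ M.carrier : ℝ)

/-- A nonzero module is `φ`-semistable if every nonzero submodule has fdSlope at most the
fdSlope of the module. -/
def FdSemistable (φ : FdMod A → ℝ) (M : FdMod A) : Prop :=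
  Nontrivial M.carrier ∧
    ∀ N : Submodule A M.carrier, N ≠ ⊥ → fdSlope φ (M.sub N) ≤ fdSlope φ M

open Module

lemma fd_dim_add (M : FdMod A) (N : Submodule A M.carrier) :
    finrank ℂ (M.sub N).carrier + finrank ℂ (M.quot N).carrier = finrank ℂ M.carrier := by
  have e : (M.quot N).carrier ≃ₗ[ℂ] (M.carrier ⧸ N.restrictScalars ℂ) :=
    (Submodule.Quotient.restrictScalarsEquiv ℂ N).symm
  have h1 : finrank ℂ (M.quot N).carrier = finrank ℂ (M.carrier ⧸ N.restrictScalars ℂ) :=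
    e.finrank_eq
  have h2 : finrank ℂ (M.sub N).carrier = finrank ℂ (N.restrictScalars ℂ) := rfl
  rw [h1, h2, add_comm]
  exact Submodule.finrank_quotient_add_finrank (N.restrictScalars ℂ)

lemma fd_slope_iso (φ : FdMod A → ℝ)
    (hiso : ∀ M N : FdMod A, (M.carrier ≃ₗ[A] N.carrier) → φ M = φ N)
    (M N : FdMod A) (e : M.carrier ≃ₗ[A] N.carrier) :
    fdSlope φ M = fdSlope φ N := by
  unfold fdSlope
  rw [hiso M N e, (e.restrictScalars ℂ).finrank_eq]

lemma fd_dim_sub_pos (M : FdMod A) (N : Submodule A M.carrier) (h : N ≠ ⊥) :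
    0 < finrank ℂ (M.sub N).carrier := by
  have : Nontrivial (M.sub N).carrier := Submodule.nontrivial_iff_ne_bot.mpr h
  exact finrank_pos

lemma fd_dim_quot_pos (M : FdMod A) (N : Submodule A M.carrier) (h : N ≠ ⊤) :
    0 < finrank ℂ (M.quot N).carrier := by
  have : Nontrivial (M.quot N).carrier :=
    Submodule.Quotient.nontrivial_iff.mpr h
  exact finrank_pos

lemma seesaw_real (a b dn dq : ℝ) (hn : 0 < dn) (hq : 0 < dq) :
    (a / dn ≤ (a + b) / (dn + dq) ↔ (a + b) / (dn + dq) ≤ b / dq) := by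
  rw [div_le_div_iff₀ hn (by linarith), div_le_div_iff₀ (by linarith) hq]
  constructor <;> intro h <;> nlinarith

lemma seesaw_real' (a b dn dq : ℝ) (hn : 0 < dn) (hq : 0 < dq) :
    ((a + b) / (dn + dq) ≤ a / dn ↔ b / dq ≤ (a + b) / (dn + dq)) := by
  rw [div_le_div_iff₀ (by linarith) hn, div_le_div_iff₀ hq (by linarith)]
  constructor <;> intro h <;> nlinarith

lemma fd_seesaw (φ : FdMod A → ℝ)
    (hadd : ∀ (M : FdMod A) (N : Submodule A M.carrier),
      φ M = φ (M.sub N) + φ (M.quot N))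
    (M : FdMod A) (N : Submodule A M.carrier) (h1 : N ≠ ⊥) (h2 : N ≠ ⊤) :
    (fdSlope φ (M.sub N) ≤ fdSlope φ M ↔ fdSlope φ M ≤ fdSlope φ (M.quot N)) := by
  have hd := fd_dim_add M N
  have hn := fd_dim_sub_pos M N h1
  have hq := fd_dim_quot_pos M N h2
  unfold fdSlope
  rw [hadd M N, ← hd]
  push_cast
  exact seesaw_real _ _ _ _ (by exact_mod_cast hn) (by exact_mod_cast hq)

lemma fd_seesaw' (φ : FdMod A → ℝ)
    (hadd : ∀ (M : FdMod A) (N : Submodule A M.carrier),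
      φ M = φ (M.sub N) + φ (M.quot N))
    (M : FdMod A) (N : Submodule A M.carrier) (h1 : N ≠ ⊥) (h2 : N ≠ ⊤) :
    (fdSlope φ M ≤ fdSlope φ (M.sub N) ↔ fdSlope φ (M.quot N) ≤ fdSlope φ M) := by
  have hd := fd_dim_add M N
  have hn := fd_dim_sub_pos M N h1
  have hq := fd_dim_quot_pos M N h2
  unfold fdSlope
  rw [hadd M N, ← hd]
  push_cast
  exact seesaw_real' _ _ _ _ (by exact_mod_cast hn) (by exact_mod_cast hq)

/-- **(Rudakov/King)**  Kernels and cokernels of morphisms between `φ`-semistable modules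
of the same fdSlope are `φ`-semistable of that same fdSlope. -/
theorem kernel_cokernel_of_semistable
    (φ : FdMod A → ℝ)
    (hiso : ∀ M N : FdMod A, (M.carrier ≃ₗ[A] N.carrier) → φ M = φ N)
    (hadd : ∀ (M : FdMod A) (N : Submodule A M.carrier),
      φ M = φ (M.sub N) + φ (M.quot N))
    (M N : FdMod A) (f : M.carrier →ₗ[A] N.carrier)
    (hM : FdSemistable φ M) (hN : FdSemistable φ N)
    (hslope : fdSlope φ M = fdSlope φ N) :
    (LinearMap.ker f ≠ ⊥ →
      FdSemistable φ (M.sub (LinearMap.ker f)) ∧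
        fdSlope φ (M.sub (LinearMap.ker f)) = fdSlope φ M) ∧
    (¬ Function.Surjective f →
      FdSemistable φ (N.quot (LinearMap.range f)) ∧
        fdSlope φ (N.quot (LinearMap.range f)) = fdSlope φ N) := by
  set K := LinearMap.ker f with hKdef
  set I := LinearMap.range f with hIdef
  constructor
  · intro hK
    have hKnt : Nontrivial (M.sub K).carrier := Submodule.nontrivial_iff_ne_bot.mpr hK
    have hle : fdSlope φ (M.sub K) ≤ fdSlope φ M := hM.2 K hK
    have hge : fdSlope φ M ≤ fdSlope φ (M.sub K) := by
      by_cases hI : I = ⊥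
      · have hKtop : K = ⊤ := LinearMap.ker_eq_top.mpr (LinearMap.range_eq_bot.mp hI)
        have e : (M.sub K).carrier ≃ₗ[A] M.carrier := hKtop ▸ Submodule.topEquiv
        exact (fd_slope_iso φ hiso _ _ e).ge
      · have hKtop : K ≠ ⊤ := by
          intro h
          exact hI (LinearMap.range_eq_bot.mpr (LinearMap.ker_eq_top.mp h))
        have hIslope : fdSlope φ (N.sub I) ≤ fdSlope φ N := hN.2 I hI
        have hquot : fdSlope φ (M.quot K) = fdSlope φ (N.sub I) :=
          fd_slope_iso φ hiso _ _ f.quotKerEquivRange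
        have hq : fdSlope φ (M.quot K) ≤ fdSlope φ M := by
          rw [hquot, hslope]; exact hIslope
        exact (fd_seesaw' φ hadd M K hK hKtop).mpr hq
    have hEq : fdSlope φ (M.sub K) = fdSlope φ M := le_antisymm hle hge
    refine ⟨⟨hKnt, ?_⟩, hEq⟩
    intro N' hN'
    have inj : Function.Injective K.subtype := Subtype.val_injective
    have hP : N'.map K.subtype ≠ ⊥ := by
      intro h
      exact hN' (Submodule.map_injective_of_injective inj (by rw [h]; exact (Submodule.map_bot _).symm))
    have e : ((M.sub K).sub N').carrier ≃ₗ[A] (M.sub (N'.map K.subtype)).carrier :=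
      Submodule.equivMapOfInjective K.subtype inj N'
    calc fdSlope φ ((M.sub K).sub N') = fdSlope φ (M.sub (N'.map K.subtype)) :=
          fd_slope_iso φ hiso _ _ e
      _ ≤ fdSlope φ M := hM.2 _ hP
      _ = fdSlope φ (M.sub K) := hEq.symm
  · intro hS
    have hItop : I ≠ ⊤ := fun h => hS (LinearMap.range_eq_top.mp h)
    have hQnt : Nontrivial (N.quot I).carrier :=
      Submodule.Quotient.nontrivial_iff.mpr hItop
    have hQslope : fdSlope φ (N.quot I) = fdSlope φ N := by
      by_cases hI : I = ⊥
      · exact fd_slope_iso φ hiso _ _ (Submodule.quotEquivOfEqBot I hI)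
      · have h1 : fdSlope φ (N.sub I) ≤ fdSlope φ N := hN.2 I hI
        have h2 : fdSlope φ N ≤ fdSlope φ (N.sub I) := by
          have e : (M.quot K).carrier ≃ₗ[A] (N.sub I).carrier := f.quotKerEquivRange
          rw [← fd_slope_iso φ hiso _ _ e, ← hslope]
          by_cases hK : K = ⊥
          · exact (fd_slope_iso φ hiso _ _ (Submodule.quotEquivOfEqBot K hK)).ge
          · have hKtop : K ≠ ⊤ := by
              intro h
              exact hI (LinearMap.range_eq_bot.mpr (LinearMap.ker_eq_top.mp h))
            exact (fd_seesaw φ hadd M K hK hKtop).mp (hM.2 K hK)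
        have hsubEq : fdSlope φ (N.sub I) = fdSlope φ N := le_antisymm h1 h2
        exact le_antisymm ((fd_seesaw' φ hadd N I hI hItop).mp hsubEq.ge)
          ((fd_seesaw φ hadd N I hI hItop).mp hsubEq.le)
    refine ⟨⟨hQnt, ?_⟩, hQslope⟩
    intro N' hN'
    by_cases hN'top : N' = ⊤
    · have e : ((N.quot I).sub N').carrier ≃ₗ[A] (N.quot I).carrier :=
        hN'top ▸ Submodule.topEquiv
      exact (fd_slope_iso φ hiso _ _ e).le
    · set P := N'.comap I.mkQ with hPdef
      have hle' : I ≤ P := by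
        intro x hx
        show I.mkQ x ∈ N'
        have : I.mkQ x = 0 := (Submodule.Quotient.mk_eq_zero I).mpr hx
        rw [this]; exact N'.zero_mem
      have hmap : P.map I.mkQ = N' :=
        Submodule.map_comap_eq_self (by rw [Submodule.range_mkQ]; exact le_top)
      have hPbot : P ≠ ⊥ := fun h => hN' (by rw [← hmap, h, Submodule.map_bot]; rfl)
      have hPtop : P ≠ ⊤ := fun h =>
        hN'top (by rw [← hmap, h, Submodule.map_top, Submodule.range_mkQ]; rfl)
      have e3 : ((N.quot I).quot N').carrier ≃ₗ[A] (N.quot P).carrier := by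
        have h := Submodule.quotientQuotientEquivQuotient I P hle'
        rw [hmap] at h
        exact h
      have h4 : fdSlope φ (N.sub P) ≤ fdSlope φ N := hN.2 P hPbot
      have h5 : fdSlope φ N ≤ fdSlope φ (N.quot P) := (fd_seesaw φ hadd N P hPbot hPtop).mp h4
      have h6 : fdSlope φ (N.quot I) ≤ fdSlope φ ((N.quot I).quot N') := by
        rw [fd_slope_iso φ hiso _ _ e3, hQslope]
        exact h5
      exact (fd_seesaw φ hadd (N.quot I) N' hN' hN'top).mpr h6
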